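/- Let G and K be finite groups with |G| ≤ |K|. Define the overlap between G and K as the maximum over all sets S with |S| ≥ |K| and injections γ : G → S, κ : K → S of the number of pairs (x,y) ∈ G × G such that there exist x', y' ∈ K with γ(x) = κ(x'), γ(y) = κ(y'), and γ(x·y) = κ(x'·y'). If G is not isomorphic to any subgroup of K, then the overlap between G and K is at most (7/9)·|G|². -/

import Mathlib

open Finset

/-- Arithmetic core: if a list of naturals with largest element `q` and remaining sum `s`
has sum of squares `S2` with `9 * S2 > 5 * n^2` and `q + s ≤ n`, then `3 * q > 2 * n`. -/
theorem aux_arith (n q s S2 : ℕ)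
    (h5 : 5 * n ^ 2 < 9 * S2)
    (hql : S2 ≤ q * (q + s))
    (hq2 : S2 ≤ q ^ 2 + s ^ 2)
    (hqs : q + s ≤ n) :
    2 * n < 3 * q := by
  by_contra hcon
  push_neg at hcon
  rcases le_or_gt (3 * q) n with h3 | h3
  · have h6 : 3 * q * (q + s) ≤ n * n := Nat.mul_le_mul h3 hqs
    nlinarith
  · zify at h5 hql hq2 hqs hcon h3 ⊢
    have hs0 : (0 : ℤ) ≤ (s : ℤ) := by positivity
    have hsle : (s : ℤ) ≤ (n : ℤ) - q := by linarith
    have hss : (s : ℤ) ^ 2 ≤ ((n : ℤ) - q) ^ 2 := by nlinarith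
    have hprod : (0 : ℤ) ≤ (2 * (n : ℤ) - 3 * q) * (3 * (q : ℤ) - n) := by
      apply mul_nonneg <;> linarith
    nlinarith

theorem aux_main {G K : Type*} [Group G] [Group K] [Fintype G] [Fintype K]
    [DecidableEq G] [DecidableEq K] (D : G → Prop) [DecidablePred D] (f : G → K)
    (hf : ∀ a b : G, D a → D b → f a = f b → a = b)
    (hcard : 7 * (Fintype.card G) ^ 2 < 9 * (Finset.univ.filter
       (fun p : G × G => D p.1 ∧ D p.2 ∧ D (p.1 * p.2) ∧ f (p.1 * p.2) = f p.1 * f p.2)).card) :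
    ∃ ψ : G →* K, Function.Injective ψ := by
  classical
  set n := Fintype.card G with hn
  set Bad : Finset (G × G) := univ.filter (fun p : G × G =>
      ¬ (D p.1 ∧ D p.2 ∧ D (p.1 * p.2) ∧ f (p.1 * p.2) = f p.1 * f p.2)) with hBadDef
  have hGoodOf : ∀ a b : G, (a, b) ∉ Bad →
      D a ∧ D b ∧ D (a * b) ∧ f (a * b) = f a * f b := by
    intro a b h
    by_contra hc
    exact h (by rw [hBadDef, mem_filter]; exact ⟨mem_univ _, hc⟩)
  have hBadcard : 9 * Bad.card < 2 * n ^ 2 := by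
    have h1 : (univ.filter (fun p : G × G =>
        D p.1 ∧ D p.2 ∧ D (p.1 * p.2) ∧ f (p.1 * p.2) = f p.1 * f p.2)).card + Bad.card
        = n ^ 2 := by
      rw [hBadDef, card_filter_add_card_filter_not, card_univ, Fintype.card_prod, sq]
    linarith
  -- the vote fibers
  set A : G → K → Finset G :=
    fun x k => univ.filter (fun y => D y ∧ D (x * y) ∧ f (x * y) * (f y)⁻¹ = k) with hA
  have hmemA : ∀ x k y, y ∈ A x k ↔ (D y ∧ D (x * y) ∧ f (x * y) * (f y)⁻¹ = k) := by
    intro x k y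
    rw [hA, mem_filter]
    simp
  have hAdisj : ∀ x : G, ∀ k k' : K, k ≠ k' → Disjoint (A x k) (A x k') := by
    intro x k k' hkk
    rw [Finset.disjoint_left]
    intro y hy hy'
    exact hkk (((hmemA x k y).1 hy).2.2.symm.trans ((hmemA x k' y).1 hy').2.2)
  have hAsum : ∀ x, ∑ k, (A x k).card ≤ n := by
    intro x
    rw [← card_biUnion (fun k _ k' _ h => hAdisj x k k' h)]
    exact (card_le_card (subset_univ _)).trans_eq card_univ
  -- collision count bound
  have key1 : ∀ x, n ^ 2 ≤ (∑ k, (A x k).card ^ 2) + 2 * Bad.card := by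
    intro x
    set W : Finset (G × G) := (univ : Finset K).biUnion (fun k => A x k ×ˢ A x k) with hW
    have hWcard : W.card = ∑ k, (A x k).card ^ 2 := by
      rw [hW, card_biUnion]
      · exact Finset.sum_congr rfl fun k _ => by rw [card_product, sq]
      · intro k _ k' _ h
        rw [Function.onFun, Finset.disjoint_left]
        intro p hp hp'
        rw [mem_product] at hp hp'
        exact (Finset.disjoint_left.mp (hAdisj x k k' h)) hp.1 hp'.1
    set T1 := univ.filter (fun p : G × G => (x * p.1, p.1⁻¹ * p.2) ∈ Bad) with hT1
    set T2 := univ.filter (fun p : G × G => (p.1, p.1⁻¹ * p.2) ∈ Bad) with hT2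
    have hT1card : T1.card ≤ Bad.card := by
      apply card_le_card_of_injOn (fun p => (x * p.1, p.1⁻¹ * p.2))
      · intro p hp; rw [hT1, mem_coe, mem_filter] at hp; exact hp.2
      · intro p _ q _ hpq
        simp only [Prod.mk.injEq] at hpq
        obtain ⟨h1, h2⟩ := hpq
        have e1 : p.1 = q.1 := mul_left_cancel h1
        rw [e1] at h2
        exact Prod.ext e1 (mul_left_cancel h2)
    have hT2card : T2.card ≤ Bad.card := by
      apply card_le_card_of_injOn (fun p => (p.1, p.1⁻¹ * p.2))
      · intro p hp; rw [hT2, mem_coe, mem_filter] at hp; exact hp.2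
      · intro p _ q _ hpq
        simp only [Prod.mk.injEq] at hpq
        obtain ⟨h1, h2⟩ := hpq
        rw [h1] at h2
        exact Prod.ext h1 (mul_left_cancel h2)
    have hcover : (univ : Finset (G × G)) ⊆ W ∪ T1 ∪ T2 := by
      intro p _
      by_cases h1 : (x * p.1, p.1⁻¹ * p.2) ∈ Bad
      · exact mem_union_left _ (mem_union_right _
          (by rw [hT1, mem_filter]; exact ⟨mem_univ _, h1⟩))
      by_cases h2 : (p.1, p.1⁻¹ * p.2) ∈ Bad
      · exact mem_union_right _ (by rw [hT2, mem_filter]; exact ⟨mem_univ _, h2⟩)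
      have G1 := hGoodOf _ _ h1
      have G2 := hGoodOf _ _ h2
      have e1 : (x * p.1) * (p.1⁻¹ * p.2) = x * p.2 := by group
      have e2 : p.1 * (p.1⁻¹ * p.2) = p.2 := by group
      rw [e1] at G1
      rw [e2] at G2
      obtain ⟨hD1, hDw, hDx2, hfx2⟩ := G1
      obtain ⟨hDp1, -, hDp2, hfp2⟩ := G2
      apply mem_union_left
      apply mem_union_left
      rw [hW, mem_biUnion]
      refine ⟨f (x * p.1) * (f p.1)⁻¹, mem_univ _, ?_⟩
      rw [mem_product]
      constructor
      · exact (hmemA _ _ _).2 ⟨hDp1, hD1, rfl⟩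
      · refine (hmemA _ _ _).2 ⟨hDp2, hDx2, ?_⟩
        rw [hfx2, hfp2]
        group
    have hchain : (univ : Finset (G × G)).card ≤ W.card + T1.card + T2.card := by
      calc (univ : Finset (G × G)).card ≤ (W ∪ T1 ∪ T2).card := card_le_card hcover
        _ ≤ (W ∪ T1).card + T2.card := card_union_le _ _
        _ ≤ W.card + T1.card + T2.card := by
            have := card_union_le W T1
            omega
    have huniv : (univ : Finset (G × G)).card = n ^ 2 := by
      rw [card_univ, Fintype.card_prod, sq]
    rw [huniv, hWcard] at hchain
    omega
  -- majority fiber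
  have hmaj : ∀ x, ∃ k : K, 2 * n < 3 * (A x k).card := by
    intro x
    obtain ⟨k₀, -, hk₀⟩ := exists_max_image (univ : Finset K)
      (fun k => (A x k).card) ⟨1, mem_univ 1⟩
    refine ⟨k₀, ?_⟩
    have hsplit : (A x k₀).card + ∑ k ∈ univ.erase k₀, (A x k).card = ∑ k, (A x k).card :=
      Finset.add_sum_erase _ (fun k => (A x k).card) (mem_univ k₀)
    have hsplit2 : (A x k₀).card ^ 2 + ∑ k ∈ univ.erase k₀, (A x k).card ^ 2
        = ∑ k, (A x k).card ^ 2 :=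
      Finset.add_sum_erase _ (fun k => (A x k).card ^ 2) (mem_univ k₀)
    have hs2 : ∑ k ∈ univ.erase k₀, (A x k).card ^ 2
        ≤ (∑ k ∈ univ.erase k₀, (A x k).card) ^ 2 := by
      calc ∑ k ∈ univ.erase k₀, (A x k).card ^ 2
          ≤ ∑ k ∈ univ.erase k₀, (A x k).card * (∑ j ∈ univ.erase k₀, (A x j).card) := by
            apply sum_le_sum
            intro k hk
            rw [sq]
            exact Nat.mul_le_mul_left _ (single_le_sum (f := fun j => (A x j).card) (fun j _ => Nat.zero_le _) hk)
        _ = _ := by rw [← sum_mul, sq]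
    have hql : ∑ k, (A x k).card ^ 2
        ≤ (A x k₀).card * ((A x k₀).card + ∑ k ∈ univ.erase k₀, (A x k).card) := by
      calc ∑ k, (A x k).card ^ 2 ≤ ∑ k, (A x k).card * (A x k₀).card := by
            apply sum_le_sum
            intro k _
            rw [sq]
            exact Nat.mul_le_mul_left _ (hk₀ k (mem_univ k))
        _ = (∑ k, (A x k).card) * (A x k₀).card := by rw [sum_mul]
        _ = (A x k₀).card * ((A x k₀).card + ∑ k ∈ univ.erase k₀, (A x k).card) := by
            rw [hsplit, mul_comm]
    have h5 : 5 * n ^ 2 < 9 * ∑ k, (A x k).card ^ 2 := by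
      have := key1 x
      linarith
    refine aux_arith n _ _ _ h5 hql ?_ ?_
    · rw [← hsplit2]
      exact Nat.add_le_add_left hs2 _
    · rw [hsplit]
      exact hAsum x
  -- the corrected function
  choose g hg using hmaj
  -- triple intersection
  have htriple : ∀ s t u : Finset G, 2 * n < 3 * s.card → 2 * n < 3 * t.card →
      2 * n < 3 * u.card → ∃ y, y ∈ s ∧ y ∈ t ∧ y ∈ u := by
    intro s t u hs ht hu
    have h1 := card_union_add_card_inter s t
    have h2 := card_union_add_card_inter (s ∩ t) u
    have h3 : (s ∪ t).card ≤ n := (card_le_card (subset_univ _)).trans_eq card_univ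
    have h4 : ((s ∩ t) ∪ u).card ≤ n := (card_le_card (subset_univ _)).trans_eq card_univ
    have h5 : 0 < ((s ∩ t) ∩ u).card := by omega
    obtain ⟨y, hy⟩ := card_pos.mp h5
    rw [mem_inter, mem_inter] at hy
    exact ⟨y, hy.1.1, hy.1.2, hy.2⟩
  -- multiplicativity
  have hmul : ∀ a b : G, g (a * b) = g a * g b := by
    intro a b
    have hPb : 2 * n < 3 * (univ.filter (fun y => b * y ∈ A a (g a))).card := by
      have : (univ.filter (fun y => b * y ∈ A a (g a))).card = (A a (g a)).card := by
        apply card_bij (fun y _ => b * y)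
        · intro y hy; exact (mem_filter.mp hy).2
        · intro y₁ _ y₂ _ h; exact mul_left_cancel h
        · intro z hz
          exact ⟨b⁻¹ * z, mem_filter.mpr ⟨mem_univ _, by rwa [mul_inv_cancel_left]⟩,
            mul_inv_cancel_left b z⟩
      rw [this]
      exact hg a
    obtain ⟨y, hy1, hy2, hy3⟩ := htriple (A (a * b) (g (a * b))) (A b (g b))
      (univ.filter (fun y => b * y ∈ A a (g a))) (hg (a * b)) (hg b) hPb
    obtain ⟨hDy, hDaby, he_ab⟩ := (hmemA _ _ _).1 hy1
    obtain ⟨-, hDby, he_b⟩ := (hmemA _ _ _).1 hy2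
    obtain ⟨-, hDaby', he_a⟩ := (hmemA _ _ _).1 (mem_filter.mp hy3).2
    have e : a * (b * y) = a * b * y := (mul_assoc a b y).symm
    rw [e] at he_a
    rw [← he_ab, ← he_a, ← he_b]
    group
  -- injectivity
  have hinj : Function.Injective g := by
    intro x₁ x₂ hx
    obtain ⟨y, hy1, hy2, -⟩ := htriple (A x₁ (g x₁)) (A x₂ (g x₂)) (A x₁ (g x₁))
      (hg x₁) (hg x₂) (hg x₁)
    obtain ⟨hDy, hD1, he1⟩ := (hmemA _ _ _).1 hy1
    obtain ⟨-, hD2, he2⟩ := (hmemA _ _ _).1 hy2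
    have hfe : f (x₁ * y) = f (x₂ * y) :=
      mul_right_cancel (he1.trans (hx ▸ he2.symm))
    have := hf _ _ hD1 hD2 hfe
    exact mul_right_cancel this
  exact ⟨MonoidHom.mk' g hmul, hinj⟩

theorem stmt_11 {G K : Type*} [Group G] [Group K] [Finite G] [Finite K]
    (hGK : Nat.card G ≤ Nat.card K)
    (hsub : ¬ ∃ ψ : G →* K, Function.Injective ψ) :
    ∀ (S : Type) (γ : G → S) (κ : K → S), Nat.card S ≥ Nat.card K →
      Function.Injective γ → Function.Injective κ →
      9 * Nat.card {p : G × G // ∃ x' y' : K,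
          γ p.1 = κ x' ∧ γ p.2 = κ y' ∧ γ (p.1 * p.2) = κ (x' * y')}
        ≤ 7 * (Nat.card G) ^ 2 := by
  intro S γ κ hS hγ hκ
  by_contra hcon
  push_neg at hcon
  apply hsub
  classical
  letI : Fintype G := Fintype.ofFinite G
  letI : Fintype K := Fintype.ofFinite K
  set D : G → Prop := fun x => ∃ k, γ x = κ k with hD
  set f : G → K := fun x => if h : D x then h.choose else 1 with hfdef
  have hDf : ∀ {x : G}, D x → γ x = κ (f x) := by
    intro x h
    have hfx : f x = h.choose := by rw [hfdef]; exact dif_pos h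
    rw [hfx]
    exact h.choose_spec
  have hfinj : ∀ a b : G, D a → D b → f a = f b → a = b := by
    intro a b ha hb hab
    apply hγ
    rw [hDf ha, hDf hb, hab]
  have hiff : ∀ p : G × G,
      (∃ x' y' : K, γ p.1 = κ x' ∧ γ p.2 = κ y' ∧ γ (p.1 * p.2) = κ (x' * y'))
      ↔ (D p.1 ∧ D p.2 ∧ D (p.1 * p.2) ∧ f (p.1 * p.2) = f p.1 * f p.2) := by
    intro p
    constructor
    · rintro ⟨x', y', h1, h2, h3⟩
      have d1 : D p.1 := ⟨x', h1⟩
      have d2 : D p.2 := ⟨y', h2⟩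
      have d3 : D (p.1 * p.2) := ⟨x' * y', h3⟩
      have e1 : f p.1 = x' := hκ (by rw [← hDf d1, h1])
      have e2 : f p.2 = y' := hκ (by rw [← hDf d2, h2])
      have e3 : f (p.1 * p.2) = x' * y' := hκ (by rw [← hDf d3, h3])
      exact ⟨d1, d2, d3, by rw [e1, e2, e3]⟩
    · rintro ⟨d1, d2, d3, he⟩
      exact ⟨f p.1, f p.2, hDf d1, hDf d2, by rw [← he]; exact hDf d3⟩
  have hcount : Nat.card {p : G × G // ∃ x' y' : K,
      γ p.1 = κ x' ∧ γ p.2 = κ y' ∧ γ (p.1 * p.2) = κ (x' * y')}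
      = (Finset.univ.filter (fun p : G × G =>
          D p.1 ∧ D p.2 ∧ D (p.1 * p.2) ∧ f (p.1 * p.2) = f p.1 * f p.2)).card := by
    rw [Nat.card_congr (Equiv.subtypeEquivRight hiff), Nat.card_eq_fintype_card,
      Fintype.card_subtype]
  have hnG : Nat.card G = Fintype.card G := Nat.card_eq_fintype_card
  rw [hcount, hnG] at hcon
  exact aux_main D f hfinj hcon
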